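/- Let q be an odd prime power. The chromatic number of the graph on vertex set SL₂(𝔽_q), where x and y are adjacent iff det(x+y) = 0, is at most 8(q+1). -/

import Mathlib

/-- The regular graph on `SL_n(R)`: distinct `x, y` are adjacent iff `det(x+y) = 0`. -/
def regGraph (n : ℕ) (R : Type) [CommRing R] :
    SimpleGraph (Matrix.SpecialLinearGroup (Fin n) R) where
  Adj x y := x ≠ y ∧ ((x : Matrix (Fin n) (Fin n) R) + y).det = 0
  symm := by
    constructor
    rintro x y ⟨h1, h2⟩
    exact ⟨h1.symm, by rwa [add_comm]⟩
  loopless := ⟨fun x h => h.1 rfl⟩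

section Aux

open scoped Classical

variable {F : Type} [Field F] [Fintype F]

/-- A "sign" function on a finite field: `0 ↦ 0`, and `sgn (-x) ≠ sgn x` for `x ≠ 0`. -/
noncomputable def sgn (F : Type) [Field F] [Fintype F] (x : F) : ZMod 3 :=
  if x = 0 then 0
  else if ((Fintype.equivFin F) x : ℕ) < ((Fintype.equivFin F) (-x) : ℕ) then 1 else 2

lemma sgn_ne_zero {x : F} (hx : x ≠ 0) : sgn F x ≠ 0 := by
  unfold sgn
  rw [if_neg hx]
  split_ifs <;> decide

lemma my_two_ne_zero (hodd : Odd (Fintype.card F)) : (2 : F) ≠ 0 := by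
  apply Ring.two_ne_zero
  intro h
  have h2 := FiniteField.even_card_iff_char_two.mp h
  obtain ⟨k, hk⟩ := hodd
  omega

lemma sgn_neg_ne (hodd : Odd (Fintype.card F)) {x : F} (hx : x ≠ 0) :
    sgn F (-x) ≠ sgn F x := by
  have hne : -x ≠ x := by
    intro h
    apply hx
    have h2x : (2 : F) * x = 0 := by linear_combination -h
    rcases mul_eq_zero.mp h2x with h' | h'
    · exact absurd h' (my_two_ne_zero hodd)
    · exact h'
  have hxne : ((Fintype.equivFin F) (-x) : ℕ) ≠ ((Fintype.equivFin F) x : ℕ) := by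
    intro h
    exact hne ((Fintype.equivFin F).injective (Fin.val_injective h))
  unfold sgn
  rw [if_neg (neg_ne_zero.mpr hx), if_neg hx, neg_neg]
  rcases lt_or_gt_of_ne hxne with h | h
  · rw [if_pos h, if_neg (by omega)]; decide
  · rw [if_neg (by omega), if_pos h]; decide

lemma row_ne (x : Matrix.SpecialLinearGroup (Fin 2) F) :
    x.1 1 0 ≠ 0 ∨ x.1 1 1 ≠ 0 := by
  by_contra h
  push_neg at h
  have hd := x.2
  rw [Matrix.det_fin_two, h.1, h.2] at hd
  simp at hd

/-- The coloring: the projective class of the bottom row, together with signs. -/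
noncomputable def col (x : Matrix.SpecialLinearGroup (Fin 2) F) :
    Option F × {p : ZMod 3 × ZMod 3 // p ≠ (0, 0)} :=
  ⟨if x.1 1 0 = 0 then none else some (x.1 1 1 * (x.1 1 0)⁻¹),
   ⟨(sgn F (x.1 1 0), sgn F (x.1 1 1)), by
      rcases row_ne x with h | h
      · exact fun hc => sgn_ne_zero h (congrArg Prod.fst hc)
      · exact fun hc => sgn_ne_zero h (congrArg Prod.snd hc)⟩⟩

lemma col_valid (hodd : Odd (Fintype.card F))
    {x y : Matrix.SpecialLinearGroup (Fin 2) F}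
    (hcol : col x = col y) : ((x : Matrix (Fin 2) (Fin 2) F) + y).det ≠ 0 := by
  set a := x.1 0 0 with ha
  set b := x.1 0 1 with hb
  set c := x.1 1 0 with hc
  set d := x.1 1 1 with hd
  set a' := y.1 0 0
  set b' := y.1 0 1
  set c' := y.1 1 0
  set d' := y.1 1 1
  have hx : a * d - b * c = 1 := by have := x.2; rwa [Matrix.det_fin_two] at this
  have hy : a' * d' - b' * c' = 1 := by have := y.2; rwa [Matrix.det_fin_two] at this
  have h1 : (if c = 0 then (none : Option F) else some (d * c⁻¹))
      = (if c' = 0 then none else some (d' * c'⁻¹)) := congrArg Prod.fst hcol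
  have h2 : sgn F c = sgn F c' := congrArg (fun p => p.2.1.1) hcol
  have h3 : sgn F d = sgn F d' := congrArg (fun p => p.2.1.2) hcol
  rw [Matrix.det_fin_two]
  simp only [Matrix.add_apply]
  intro hdet
  replace hdet : (a + a') * (d + d') - (b + b') * (c + c') = 0 := hdet
  by_cases hc0 : c = 0
  · -- both bottom-left entries are zero
    have hc'0 : c' = 0 := by
      by_contra hc'0
      rw [if_pos hc0, if_neg hc'0] at h1
      exact Option.some_ne_none _ h1.symm
    have hd0 : d ≠ 0 := by rcases row_ne x with h | h; exact absurd hc0 h; exact h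
    rw [hc0] at hdet hx
    rw [hc'0] at hdet hy
    have hdd' : d' = -d := by
      have hfac : (a + a') * (d + d') = 0 := by linear_combination hdet
      rcases mul_eq_zero.mp hfac with h | h
      · have hane : a ≠ 0 := by
          intro h0; rw [h0] at hx; simp at hx
        have h4 : a * (d' + d) = 0 := by linear_combination d' * h + hx - hy
        rcases mul_eq_zero.mp h4 with h' | h'
        · exact absurd h' hane
        · linear_combination h'
      · linear_combination h
    exact sgn_neg_ne hodd hd0 (hdd' ▸ h3.symm)
  · have hc'0 : c' ≠ 0 := by
      intro h
      rw [if_neg hc0, if_pos h] at h1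
      exact Option.some_ne_none _ h1
    rw [if_neg hc0, if_neg hc'0] at h1
    have hq : d * c⁻¹ = d' * c'⁻¹ := Option.some_injective _ h1
    obtain ⟨t, htne, hcc', hdd'⟩ : ∃ t : F, t ≠ 0 ∧ c' = t * c ∧ d' = t * d := by
      refine ⟨c' * c⁻¹, mul_ne_zero hc'0 (inv_ne_zero hc0), by field_simp, ?_⟩
      field_simp at hq ⊢
      linear_combination -hq

    have hkey : (1 + t) ^ 2 = 0 := by
      rw [hcc', hdd'] at hdet hy
      linear_combination t * hdet - (t + t^2) * hx - (1 + t) * hy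
    have ht1 : t = -1 := by
      have h0 := (pow_eq_zero_iff (by norm_num : (2:ℕ) ≠ 0)).mp hkey
      linear_combination h0
    rw [ht1] at hcc'
    have hcc : c' = -c := by linear_combination hcc'
    exact sgn_neg_ne hodd hc0 (hcc ▸ h2.symm)

end Aux

/-- For `F` a finite field of odd order `q`, the chromatic number of the regular
graph on `SL₂(F)` (where `x ~ y` iff `det(x+y) = 0`) is at most `8(q+1)`. -/
theorem chromatic_regular_graph_upper {F : Type} [Field F] [Fintype F]
    (hodd : Odd (Fintype.card F)) :
    (regGraph 2 F).chromaticNumber ≤ ((8 * (Fintype.card F + 1) : ℕ) : ℕ∞) := by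
  classical
  let C : (regGraph 2 F).Coloring (Option F × {p : ZMod 3 × ZMod 3 // p ≠ (0, 0)}) :=
    SimpleGraph.Coloring.mk col (fun {x y} hadj hcol => col_valid hodd hcol hadj.2)
  have hcard : Fintype.card (Option F × {p : ZMod 3 × ZMod 3 // p ≠ (0, 0)})
      = 8 * (Fintype.card F + 1) := by
    rw [Fintype.card_prod, Fintype.card_option]
    have h8 : Fintype.card {p : ZMod 3 × ZMod 3 // p ≠ (0, 0)} = 8 := by decide
    rw [h8]; ring
  have hco := C.colorable
  rw [hcard] at hco
  exact hco.chromaticNumber_le
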